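/- Fix γ ∈ (0, 1) and β ∈ (0, 1]. For n₁ ≥ n₂ > 0 with ratio r = n₂/n₁, let λ̃₁(r) = r·((1 − ((4+γ²)/(4γ)) r^β (1 − (1/(1+r))^β))^{−1/β} − 1) (the non-unit branch of the bargaining solution, which applies for all sufficiently small r). Then as r → 0⁺, λ̃₁(r) = ((4+γ²)/(4γ)) r^{β+2} (1 + o(1)); that is, the limit of λ̃₁(r) / r^{β+2} as r → 0⁺ equals (4+γ²)/(4γ). -/

import Mathlib

open Filter Real Set

/-- The non-unit branch of the Nash bargaining solution `λ̃₁`, as a function of the data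
ratio `r = n₂/n₁`. -/
noncomputable def lamBranch (γ β r : ℝ) : ℝ :=
  r * ((1 - ((4 + γ ^ 2) / (4 * γ)) * r ^ β *
      (1 - (1 / (1 + r)) ^ β)) ^ (-(1 / β)) - 1)

/-- slope limit for `u ↦ (1-u)^(-(1/β))` at `0`. -/
lemma aux_slope1 (β : ℝ) (hβ₁ : 0 < β) :
    Tendsto (fun u : ℝ => ((1 - u) ^ (-(1 / β)) - 1) / u) (nhdsWithin 0 {(0:ℝ)}ᶜ)
      (nhds (1 / β)) := by
  have hd : HasDerivAt (fun u : ℝ => (1 - u) ^ (-(1 / β))) (1 / β) 0 := by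
    have h1 : HasDerivAt (fun u : ℝ => 1 - u) (-1) 0 := by
      simpa using (hasDerivAt_id (0:ℝ)).const_sub 1
    have := h1.rpow_const (p := -(1 / β)) (by norm_num)
    simpa using this
  have := hasDerivAt_iff_tendsto_slope.mp hd
  refine this.congr (fun u => ?_)
  simp [slope, div_eq_inv_mul, mul_comm]

lemma aux_slope2 (β : ℝ) (hβ₁ : 0 < β) :
    Tendsto (fun r : ℝ => (1 - (1 / (1 + r)) ^ β) / r) (nhdsWithin 0 {(0:ℝ)}ᶜ)
      (nhds β) := by
  have hd : HasDerivAt (fun r : ℝ => 1 - (1 / (1 + r)) ^ β) β 0 := by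
    have h0 : HasDerivAt (fun r : ℝ => 1 + r) 1 0 := by
      simpa using (hasDerivAt_id (0:ℝ)).const_add 1
    have h1 : HasDerivAt (fun r : ℝ => 1 / (1 + r)) (-1) 0 := by
      have h2 : HasDerivAt (fun r : ℝ => (1 + r)⁻¹) (-1) 0 := by
        simpa using h0.fun_inv (by norm_num)
      simpa [one_div] using h2
    have h3 := h1.rpow_const (p := β) (by norm_num)
    have h4 : HasDerivAt (fun r : ℝ => (1 / (1 + r)) ^ β) (-β) 0 := by
      simpa using h3
    simpa using h4.const_sub 1
  have := hasDerivAt_iff_tendsto_slope.mp hd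
  refine this.congr (fun u => ?_)
  simp [slope, div_eq_inv_mul, mul_comm]

/-- **Asymptotics of the bargaining share (from Theorem 2).** For `γ ∈ (0,1)` and
`β ∈ (0,1]`, as the data ratio `r = n₂/n₁ → 0⁺`,
`λ̃₁(r) = ((4+γ²)/(4γ)) r^{β+2} (1 + o(1))`; i.e. `λ̃₁(r)/r^{β+2} → (4+γ²)/(4γ)`. -/
theorem lamBranch_asymptotics
    (γ β : ℝ) (hγ₁ : 0 < γ) (hγ₂ : γ < 1) (hβ₁ : 0 < β) (hβ₂ : β ≤ 1) :
    Filter.Tendsto (fun r => lamBranch γ β r / r ^ (β + 2))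
      (nhdsWithin 0 (Set.Ioi 0)) (nhds ((4 + γ ^ 2) / (4 * γ))) := by
  set C : ℝ := (4 + γ ^ 2) / (4 * γ) with hC
  have hCpos : 0 < C := by positivity
  set u : ℝ → ℝ := fun r => C * r ^ β * (1 - (1 / (1 + r)) ^ β) with hu
  -- u r > 0 for r > 0
  have hupos : ∀ r ∈ Ioi (0:ℝ), 0 < u r := by
    intro r hr
    have hr' : (0:ℝ) < r := hr
    have h1 : (1 / (1 + r)) ^ β < 1 :=
      Real.rpow_lt_one (by positivity) (by rw [div_lt_one (by linarith)]; linarith) hβ₁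
    have h2 : (0:ℝ) < r ^ β := Real.rpow_pos_of_pos hr' β
    have : (0:ℝ) < 1 - (1 / (1 + r)) ^ β := by linarith
    positivity
  -- u → 0 within Ioi 0
  have hu0 : Tendsto u (nhdsWithin 0 (Ioi 0)) (nhds 0) := by
    have hr : Tendsto (fun r : ℝ => r ^ β) (nhdsWithin 0 (Ioi 0)) (nhds 0) := by
      have := (Real.continuousAt_rpow_const 0 β (Or.inr hβ₁.le)).continuousWithinAt
        (s := Ioi (0:ℝ))
      simpa [Real.zero_rpow hβ₁.ne'] using this.tendsto
    have hs : Tendsto (fun r : ℝ => 1 - (1 / (1 + r)) ^ β) (nhdsWithin 0 (Ioi 0))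
        (nhds 0) := by
      have hc : ContinuousAt (fun r : ℝ => 1 - (1 / (1 + r)) ^ β) 0 := by
        have : ContinuousAt (fun r : ℝ => (1 / (1 + r)) ^ β) 0 := by
          apply ContinuousAt.rpow_const
          · exact (continuousAt_const.div (continuousAt_const.add continuousAt_id)
              (by norm_num))
          · left; norm_num
        exact continuousAt_const.sub this
      have := (hc.continuousWithinAt (s := Ioi (0:ℝ))).tendsto
      simpa using this
    have h := ((tendsto_const_nhds (x := C)).mul hr).mul hs
    simpa [hu, one_div] using h
  -- compose limit 1 with u
  have huN : Tendsto u (nhdsWithin 0 (Ioi 0)) (nhdsWithin 0 {(0:ℝ)}ᶜ) := by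
    refine tendsto_nhdsWithin_iff.mpr ⟨hu0, ?_⟩
    filter_upwards [self_mem_nhdsWithin] with r hr
    exact (hupos r hr).ne'
  have hlim1 := (aux_slope1 β hβ₁).comp huN
  have hlim2 : Tendsto (fun r : ℝ => (1 - (1 / (1 + r)) ^ β) / r)
      (nhdsWithin 0 (Ioi 0)) (nhds β) :=
    (aux_slope2 β hβ₁).mono_left
      (nhdsWithin_mono 0 (fun x hx => ne_of_gt hx))
  have hmain := hlim1.mul ((tendsto_const_nhds (x := C)).mul hlim2)
  have hval : 1 / β * (C * β) = C := by field_simp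
  rw [hval] at hmain
  refine hmain.congr' ?_
  filter_upwards [self_mem_nhdsWithin] with r hr
  have hr' : (0:ℝ) < r := hr
  have hune : u r ≠ 0 := (hupos r hr).ne'
  have hrb : (0:ℝ) < r ^ β := Real.rpow_pos_of_pos hr' β
  have hsplit : r ^ (β + 2) = r ^ β * (r * r) := by
    rw [Real.rpow_add hr']
    norm_num [Real.rpow_two, sq]
  show (fun u : ℝ => ((1 - u) ^ (-(1 / β)) - 1) / u) (u r) *
      (C * ((1 - (1 / (1 + r)) ^ β) / r)) = lamBranch γ β r / r ^ (β + 2)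
  have h1s : 1 - (1 / (1 + r)) ^ β ≠ 0 := by
    have h1 : (1 / (1 + r)) ^ β < 1 :=
      Real.rpow_lt_one (by positivity) (by rw [div_lt_one (by linarith)]; linarith) hβ₁
    intro h; nlinarith
  have huexp : u r = C * r ^ β * (1 - (1 / (1 + r)) ^ β) := rfl
  simp only [huexp]
  rw [lamBranch, ← hC, hsplit]
  set s := (1 / (1 + r)) ^ β with hs
  set X := (1 - C * r ^ β * (1 - s)) ^ (-(1 / β)) with hX
  have hrbne : r ^ β ≠ 0 := hrb.ne'
  field_simp
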